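/- If a sequence of real numbers (r_n) converges classically to a real number r, then the s-limit of the sign expansions of the r_n equals the sign expansion of r + ε for some ε ∈ {0, 1/ω, −1/ω}; equivalently, lim r_n = slim r_n + ε in the surreals with ε infinitesimal of this form. -/
import Mathlib


open scoped Classical

noncomputable def slim {L M A : Type*} [LinearOrder L] [LinearOrder M]
    (a : L → M → Option A) : M → Option A := fun m =>
  if h : ∃ l0 : L, ∀ m' ≤ m, ∀ l, l0 ≤ l → ∀ l', l0 ≤ l' →
      a l m' = a l' m' ∧ (a l m').isSome
  then a h.choose m else none

noncomputable def slimIio {A : Type*} (α : Ordinal) (s : Ordinal → Ordinal → Option A) :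
    Ordinal → Option A :=
  slim (L := Set.Iio α) (fun β => s β.1)

abbrev SignStr := Ordinal → Option Bool

def signVal : Option Bool → ℕ
  | none => 1
  | some false => 0
  | some true => 2

def strLT (s t : SignStr) : Prop :=
  ∃ γ, (∀ β < γ, s β = t β) ∧ signVal (s γ) < signVal (t γ)

def strLE (s t : SignStr) : Prop := s = t ∨ strLT s t

noncomputable def ordStr (α : Ordinal) : SignStr := fun γ => if γ < α then some true else none

noncomputable def strLength {A : Type*} (a : Ordinal → Option A) : Ordinal :=
  sInf {γ | a γ = none}

noncomputable def strAppend {A : Type*} (a b : Ordinal → Option A) : Ordinal → Option A :=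
  fun γ => if γ < strLength a then a γ else b (γ - strLength a)

noncomputable def oneOverOmega : SignStr := fun γ =>
  if γ = 0 then some true else if γ < Ordinal.omega0 then some false else none

noncomputable def negOneOverOmega : SignStr := fun γ =>
  if γ = 0 then some false else if γ < Ordinal.omega0 then some true else none

def IsDyadic (x : ℝ) : Prop := ∃ (k : ℤ) (m : ℕ), x = k / 2 ^ m

noncomputable def cand : Option ℝ × Option ℝ → ℝ
  | (none, none) => 0
  | (some l, none) => l + 1
  | (none, some u) => u - 1
  | (some l, some u) => (l + u) / 2

noncomputable def signState (r : ℝ) : ℕ → Option ℝ × Option ℝ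
  | 0 => (none, none)
  | n + 1 =>
      let st := signState r n
      let c := cand st
      if c < r then (some c, st.2)
      else if r < c then (st.1, some c)
      else st

noncomputable def signAt (r : ℝ) (n : ℕ) : Option Bool :=
  let c := cand (signState r n)
  if c < r then some true else if r < c then some false else none

noncomputable def signExp (r : ℝ) : SignStr := fun γ =>
  if h : ∃ n : ℕ, γ = (n : Ordinal) then signAt r h.choose else none


section MyHelpers

private lemma signExp_natCast (r : ℝ) (n : ℕ) : signExp r (n : Ordinal) = signAt r n := by
  have h : ∃ m : ℕ, (n : Ordinal) = (m : Ordinal) := ⟨n, rfl⟩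
  have he : n = h.choose := Nat.cast_injective h.choose_spec
  simp only [signExp]
  rw [dif_pos h, ← he]

private lemma signExp_none (r : ℝ) (γ : Ordinal) (h : Ordinal.omega0 ≤ γ) :
    signExp r γ = none := by
  simp only [signExp]
  rw [dif_neg]
  rintro ⟨n, rfl⟩
  exact absurd h (not_le.mpr (Ordinal.nat_lt_omega0 n))

private lemma slim_eq_some {L M A : Type*} [LinearOrder L] [LinearOrder M]
    (a : L → M → Option A) (m : M) (l0 : L)
    (h : ∀ m' ≤ m, ∀ l, l0 ≤ l → ∀ l', l0 ≤ l' → a l m' = a l' m' ∧ (a l m').isSome) :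
    slim a m = a l0 m := by
  have hex : ∃ l1 : L, ∀ m' ≤ m, ∀ l, l1 ≤ l → ∀ l', l1 ≤ l' →
      a l m' = a l' m' ∧ (a l m').isSome := ⟨l0, h⟩
  simp only [slim]
  rw [dif_pos hex]
  have h1 := (hex.choose_spec m le_rfl hex.choose le_rfl (max hex.choose l0)
    (le_max_left _ _)).1
  have h2 := (h m le_rfl (max hex.choose l0) (le_max_right _ _) l0 le_rfl).1
  rw [h1, h2]

private lemma slim_eq_none {L M A : Type*} [LinearOrder L] [LinearOrder M]
    (a : L → M → Option A) (m : M)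
    (h : ∀ l0 : L, ∃ m', m' ≤ m ∧ ∃ l l', l0 ≤ l ∧ l0 ≤ l' ∧
      ¬(a l m' = a l' m' ∧ (a l m').isSome)) :
    slim a m = none := by
  simp only [slim]
  rw [dif_neg]
  rintro ⟨l1, hl1⟩
  obtain ⟨m', hm', l, l', hl, hl', hbad⟩ := h l1
  exact hbad (hl1 m' hm' l hl l' hl')

private lemma cand_sn (a : ℝ) : cand (some a, none) = a + 1 := rfl
private lemma cand_ns (b : ℝ) : cand (none, some b) = b - 1 := rfl
private lemma cand_ss (a b : ℝ) : cand (some a, some b) = (a + b) / 2 := rfl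

private lemma signAt_isSome {x : ℝ} {k : ℕ} (h : cand (signState x k) ≠ x) :
    (signAt x k).isSome := by
  rcases h.lt_or_gt with h1 | h1
  · simp [signAt, h1]
  · simp [signAt, h1, asymm h1]

private lemma signAt_eq_none {x : ℝ} {k : ℕ} (h : cand (signState x k) = x) :
    signAt x k = none := by
  simp [signAt, h]

private lemma signState_bounds (x : ℝ) (m : ℕ) :
    (∀ l, (signState x m).1 = some l → l < x) ∧ (∀ u, (signState x m).2 = some u → x < u) := by
  induction m with
  | zero => constructor <;> intro v hv <;> simp [signState] at hv
  | succ m ih =>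
    by_cases h1 : cand (signState x m) < x
    · have hs : signState x (m+1) = (some (cand (signState x m)), (signState x m).2) := by
        simp [signState, h1]
      rw [hs]
      exact ⟨fun l hl => by simp only at hl; rw [← Option.some_inj.mp hl]; exact h1, ih.2⟩
    · by_cases h2 : x < cand (signState x m)
      · have hs : signState x (m+1) = ((signState x m).1, some (cand (signState x m))) := by
          simp [signState, h1, h2]
        rw [hs]
        exact ⟨ih.1, fun u hu => by simp only at hu; rw [← Option.some_inj.mp hu]; exact h2⟩
      · have hs : signState x (m+1) = signState x m := by simp [signState, h1, h2]
        rw [hs]; exact ih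

private lemma signState_stable (x : ℝ) :
    ∀ m : ℕ, (∀ k < m, cand (signState x k) ≠ x) →
    ∃ δ > 0, ∀ y : ℝ, |y - x| < δ →
      signState y m = signState x m ∧ ∀ k < m, signAt y k = signAt x k := by
  intro m
  induction m with
  | zero => exact fun _ => ⟨1, one_pos, fun y _ => ⟨rfl, fun k hk => absurd hk (Nat.not_lt_zero k)⟩⟩
  | succ m ih =>
    intro hm
    obtain ⟨δ, hδ, hs⟩ := ih (fun k hk => hm k (hk.trans (Nat.lt_succ_self m)))
    have hc : cand (signState x m) ≠ x := hm m (Nat.lt_succ_self m)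
    refine ⟨min δ (|cand (signState x m) - x|),
      lt_min hδ (abs_pos.mpr (sub_ne_zero.mpr hc)), fun y hy => ?_⟩
    have hy1 : |y - x| < δ := lt_of_lt_of_le hy (min_le_left _ _)
    have hy2 : |y - x| < |cand (signState x m) - x| := lt_of_lt_of_le hy (min_le_right _ _)
    obtain ⟨hst, hsg⟩ := hs y hy1
    have hcy : cand (signState y m) = cand (signState x m) := by rw [hst]
    rcases hc.lt_or_gt with h1 | h1
    · have hxc : |cand (signState x m) - x| = x - cand (signState x m) := by
        rw [abs_sub_comm]; exact abs_of_pos (sub_pos.mpr h1)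
      rw [hxc] at hy2
      have hcylt : cand (signState x m) < y := by
        have := (abs_lt.mp hy2).1; linarith
      have hstepA : signState y (m+1) = (some (cand (signState x m)), (signState y m).2) := by
        simp [signState, hcy, hcylt]
      have hstepA' : signState x (m+1) = (some (cand (signState x m)), (signState x m).2) := by
        simp [signState, h1]
      refine ⟨by rw [hstepA, hstepA', hst], fun k hk => ?_⟩
      rcases Nat.lt_succ_iff_lt_or_eq.mp hk with hk' | rfl
      · exact hsg k hk'
      · have hA : signAt y k = some true := by simp [signAt, hcy, hcylt]
        have hB : signAt x k = some true := by simp [signAt, h1]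
        rw [hA, hB]
    · have hxc : |cand (signState x m) - x| = cand (signState x m) - x :=
        abs_of_pos (sub_pos.mpr h1)
      rw [hxc] at hy2
      have hcygt : y < cand (signState x m) := by
        have := (abs_lt.mp hy2).2; linarith
      have hstepA : signState y (m+1) = ((signState y m).1, some (cand (signState x m))) := by
        simp [signState, hcy, hcygt, asymm hcygt]
      have hstepA' : signState x (m+1) = ((signState x m).1, some (cand (signState x m))) := by
        simp [signState, h1, asymm h1]
      refine ⟨by rw [hstepA, hstepA', hst], fun k hk => ?_⟩
      rcases Nat.lt_succ_iff_lt_or_eq.mp hk with hk' | rfl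
      · exact hsg k hk'
      · have hA : signAt y k = some false := by simp [signAt, hcy, hcygt, asymm hcygt]
        have hB : signAt x k = some false := by simp [signAt, h1, asymm h1]
        rw [hA, hB]

private lemma signState_stopped (x : ℝ) (N : ℕ) (hN : cand (signState x N) = x) :
    ∀ m, N ≤ m → signState x m = signState x N := by
  intro m
  induction m with
  | zero => intro hm; rw [Nat.le_zero.mp hm]
  | succ m ih =>
    intro hm
    rcases eq_or_lt_of_le hm with h | h
    · rw [← h]
    · have h2 := ih (by omega)
      have h3 : cand (signState x m) = x := by rw [h2, hN]
      have h4 : signState x (m+1) = signState x m := by simp [signState, h3]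
      rw [h4, h2]

private lemma signAt_stopped (x : ℝ) (N : ℕ) (hN : cand (signState x N) = x)
    (m : ℕ) (hm : N ≤ m) : signAt x m = none := by
  apply signAt_eq_none
  rw [signState_stopped x N hN m hm, hN]

private lemma strLength_signExp (x : ℝ) (N : ℕ) (hmin : ∀ k < N, cand (signState x k) ≠ x)
    (hN : cand (signState x N) = x) : strLength (signExp x) = (N : Ordinal) := by
  rw [strLength]
  apply le_antisymm
  · apply csInf_le'
    rw [Set.mem_setOf_eq, signExp_natCast]
    exact signAt_stopped x N hN N le_rfl
  · apply le_csInf ⟨(N : Ordinal), by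
      rw [Set.mem_setOf_eq, signExp_natCast]; exact signAt_stopped x N hN N le_rfl⟩
    intro b hb
    by_contra hlt
    push_neg at hlt
    have hbω : b < Ordinal.omega0 := hlt.trans (Ordinal.nat_lt_omega0 N)
    obtain ⟨k, rfl⟩ := Ordinal.lt_omega0.mp hbω
    have hk : k < N := by exact_mod_cast hlt
    rw [Set.mem_setOf_eq, signExp_natCast] at hb
    exact absurd hb (Option.isSome_iff_ne_none.mp (signAt_isSome (hmin k hk)))

private lemma oneOverOmega_omega0_le {β : Ordinal} (h : Ordinal.omega0 ≤ β) :
    oneOverOmega β = none := by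
  have h0 : β ≠ 0 := by rintro rfl; exact Ordinal.omega0_pos.not_ge h
  simp [oneOverOmega, h0, not_lt.mpr h]

private lemma negOneOverOmega_omega0_le {β : Ordinal} (h : Ordinal.omega0 ≤ β) :
    negOneOverOmega β = none := by
  have h0 : β ≠ 0 := by rintro rfl; exact Ordinal.omega0_pos.not_ge h
  simp [negOneOverOmega, h0, not_lt.mpr h]

private lemma upper_tail (x : ℝ) (N : ℕ) (hmin : ∀ k < N, cand (signState x k) ≠ x)
    (hN : cand (signState x N) = x) (j : ℕ) :
    ∃ δ > 0, ∃ st0 : Option ℝ × Option ℝ, st0.1 = some x ∧ x < cand st0 ∧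
      ∀ y : ℝ, x < y → y - x < δ →
        signState y (N + 1 + j) = st0 ∧
        ∀ k ≤ N + j, signAt y k =
          (if k < N then signAt x k else if k = N then some true else some false) := by
  induction j with
  | zero =>
    obtain ⟨δ, hδ, hs⟩ := signState_stable x N hmin
    refine ⟨δ, hδ, (some x, (signState x N).2), rfl, ?_, ?_⟩
    · rcases h2 : (signState x N).2 with _ | u
      · rw [cand_sn]; linarith
      · have hu : x < u := (signState_bounds x N).2 u h2
        rw [cand_ss]; linarith
    · intro y hxy hyx
      have hy : |y - x| < δ := by rw [abs_of_pos (by linarith)]; exact hyx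
      obtain ⟨hst, hsg⟩ := hs y hy
      have hcy : cand (signState y N) = x := by rw [hst, hN]
      constructor
      · show signState y (N + 1 + 0) = _
        have : N + 1 + 0 = N + 1 := rfl
        rw [this]
        have : signState y (N+1) = (some x, (signState y N).2) := by
          simp [signState, hcy, hxy]
        rw [this, hst]
      · intro k hk
        simp only [Nat.add_zero] at hk
        rcases lt_or_eq_of_le hk with hk' | rfl
        · rw [if_pos hk']; exact hsg k hk'
        · rw [if_neg (lt_irrefl k), if_pos rfl]
          simp [signAt, hcy, hxy]
  | succ j ih =>
    obtain ⟨δ, hδ, st0, hst1, hcst, hP⟩ := ih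
    refine ⟨min δ (cand st0 - x), lt_min hδ (by linarith), (some x, some (cand st0)), rfl, ?_, ?_⟩
    · rw [cand_ss]; linarith
    · intro y hxy hyx
      have hy1 : y - x < δ := lt_of_lt_of_le hyx (min_le_left _ _)
      have hy2 : y < cand st0 := by
        have := lt_of_lt_of_le hyx (min_le_right _ _); linarith
      obtain ⟨hst, hsg⟩ := hP y hxy hy1
      have hcy : cand (signState y (N+1+j)) = cand st0 := by rw [hst]
      have hidx : N + 1 + (j+1) = (N + 1 + j) + 1 := by ring
      constructor
      · rw [hidx]
        have hstep : signState y ((N+1+j)+1) = ((signState y (N+1+j)).1, some (cand st0)) := by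
          simp [signState, hcy, hy2, not_lt.mpr hy2.le]
        rw [hstep, hst, hst1]
      · intro k hk
        rcases eq_or_lt_of_le hk with rfl | hk'
        · rw [if_neg (by omega), if_neg (by omega)]
          have he : N + (j+1) = N + 1 + j := by ring
          rw [he]
          simp [signAt, hcy, hy2, not_lt.mpr hy2.le]
        · exact hsg k (by omega)

private lemma lower_tail (x : ℝ) (N : ℕ) (hmin : ∀ k < N, cand (signState x k) ≠ x)
    (hN : cand (signState x N) = x) (j : ℕ) :
    ∃ δ > 0, ∃ st0 : Option ℝ × Option ℝ, st0.2 = some x ∧ cand st0 < x ∧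
      ∀ y : ℝ, y < x → x - y < δ →
        signState y (N + 1 + j) = st0 ∧
        ∀ k ≤ N + j, signAt y k =
          (if k < N then signAt x k else if k = N then some false else some true) := by
  induction j with
  | zero =>
    obtain ⟨δ, hδ, hs⟩ := signState_stable x N hmin
    refine ⟨δ, hδ, ((signState x N).1, some x), rfl, ?_, ?_⟩
    · rcases h2 : (signState x N).1 with _ | l
      · rw [cand_ns]; linarith
      · have hl : l < x := (signState_bounds x N).1 l h2
        rw [cand_ss]; linarith
    · intro y hxy hyx
      have hy : |y - x| < δ := by rw [abs_of_neg (by linarith)]; linarith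
      obtain ⟨hst, hsg⟩ := hs y hy
      have hcy : cand (signState y N) = x := by rw [hst, hN]
      constructor
      · show signState y (N + 1 + 0) = _
        have : N + 1 + 0 = N + 1 := rfl
        rw [this]
        have : signState y (N+1) = ((signState y N).1, some x) := by
          simp [signState, hcy, hxy, asymm hxy]
        rw [this, hst]
      · intro k hk
        simp only [Nat.add_zero] at hk
        rcases lt_or_eq_of_le hk with hk' | rfl
        · rw [if_pos hk']; exact hsg k hk'
        · rw [if_neg (lt_irrefl k), if_pos rfl]
          simp [signAt, hcy, hxy, asymm hxy]
  | succ j ih =>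
    obtain ⟨δ, hδ, st0, hst1, hcst, hP⟩ := ih
    refine ⟨min δ (x - cand st0), lt_min hδ (by linarith), (some (cand st0), some x), rfl, ?_, ?_⟩
    · rw [cand_ss]; linarith
    · intro y hxy hyx
      have hy1 : x - y < δ := lt_of_lt_of_le hyx (min_le_left _ _)
      have hy2 : cand st0 < y := by
        have := lt_of_lt_of_le hyx (min_le_right _ _); linarith
      obtain ⟨hst, hsg⟩ := hP y hxy hy1
      have hcy : cand (signState y (N+1+j)) = cand st0 := by rw [hst]
      have hidx : N + 1 + (j+1) = (N + 1 + j) + 1 := by ring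
      constructor
      · rw [hidx]
        have hstep : signState y ((N+1+j)+1) = (some (cand st0), (signState y (N+1+j)).2) := by
          simp [signState, hcy, hy2]
        rw [hstep, hst, hst1]
      · intro k hk
        rcases eq_or_lt_of_le hk with rfl | hk'
        · rw [if_neg (by omega), if_neg (by omega)]
          have he : N + (j+1) = N + 1 + j := by ring
          rw [he]
          simp [signAt, hcy, hy2]
        · exact hsg k (by omega)

end MyHelpers


private lemma slim_none_omega (r : ℕ → ℝ) (γ : Ordinal) (hγ : Ordinal.omega0 ≤ γ) :
    slim (fun n => signExp (r n)) γ = none := by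
  apply slim_eq_none
  intro l0
  refine ⟨γ, le_rfl, l0, l0, le_rfl, le_rfl, ?_⟩
  rintro ⟨-, hsome⟩
  have h : signExp (r l0) γ = none := signExp_none _ _ hγ
  simp only [h, Option.isSome_none] at hsome
  exact Bool.noConfusion hsome

private lemma slim_pre (r : ℕ → ℝ) (x : ℝ)
    (hclose : ∀ δ : ℝ, 0 < δ → ∃ n0 : ℕ, ∀ n, n0 ≤ n → |r n - x| < δ)
    (m : ℕ) (hm : ∀ k, k ≤ m → cand (signState x k) ≠ x) :
    slim (fun n => signExp (r n)) (m : Ordinal) = signAt x m := by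
  obtain ⟨δ, hδ, hs⟩ := signState_stable x (m+1) (fun k hk => hm k (by omega))
  obtain ⟨t, ht⟩ := hclose δ hδ
  have key : ∀ k, k ≤ m → ∀ l, t ≤ l → signExp (r l) (k : Ordinal) = signAt x k := by
    intro k hk l hl
    rw [signExp_natCast]
    exact (hs (r l) (ht l hl)).2 k (by omega)
  have cond : ∀ m' ≤ (m : Ordinal), ∀ l, t ≤ l → ∀ l', t ≤ l' →
      signExp (r l) m' = signExp (r l') m' ∧ (signExp (r l) m').isSome := by
    intro m' hm' l hl l' hl'
    have hω : m' < Ordinal.omega0 := lt_of_le_of_lt hm' (Ordinal.nat_lt_omega0 m)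
    obtain ⟨k, rfl⟩ := Ordinal.lt_omega0.mp hω
    have hk : k ≤ m := by exact_mod_cast hm'
    rw [key k hk l hl, key k hk l' hl']
    exact ⟨rfl, signAt_isSome (hm k hk)⟩
  rw [slim_eq_some (fun n => signExp (r n)) _ t cond]
  exact key m le_rfl t le_rfl

private lemma omega_tail {N : ℕ} {γ : Ordinal} (hγ : Ordinal.omega0 ≤ γ) :
    ¬ γ < (N : Ordinal) ∧ Ordinal.omega0 ≤ γ - (N : Ordinal) := by
  have hle : (N : Ordinal) ≤ γ := le_trans (Ordinal.nat_lt_omega0 N).le hγ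
  refine ⟨not_lt.mpr hle, ?_⟩
  by_contra hlt
  push_neg at hlt
  obtain ⟨k, hk⟩ := Ordinal.lt_omega0.mp hlt
  have hadd := Ordinal.add_sub_cancel_of_le hle
  rw [hk, ← Nat.cast_add] at hadd
  rw [← hadd] at hγ
  exact absurd hγ (not_le.mpr (Ordinal.nat_lt_omega0 (N + k)))

private lemma case_up (r : ℕ → ℝ) (x : ℝ)
    (hclose : ∀ δ : ℝ, 0 < δ → ∃ n0 : ℕ, ∀ n, n0 ≤ n → |r n - x| < δ)
    (N : ℕ) (hmin : ∀ k, k < N → cand (signState x k) ≠ x)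
    (hN : cand (signState x N) = x)
    (hup : ∃ n0 : ℕ, ∀ n, n0 ≤ n → x < r n) :
    slim (fun n => signExp (r n)) = strAppend (signExp x) oneOverOmega := by
  have hlen : strLength (signExp x) = (N : Ordinal) := strLength_signExp x N hmin hN
  funext γ
  rcases lt_or_ge γ Ordinal.omega0 with hγ | hγ
  · obtain ⟨m, rfl⟩ := Ordinal.lt_omega0.mp hγ
    rcases lt_or_ge m N with hm | hm
    · rw [slim_pre r x hclose m (fun k hk => hmin k (by omega))]
      simp only [strAppend]
      rw [hlen, if_pos (Nat.cast_lt.mpr hm), signExp_natCast]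
    · obtain ⟨n0, hn0⟩ := hup
      obtain ⟨δ, hδ, st0, -, -, hP⟩ := upper_tail x N hmin hN (m - N)
      obtain ⟨t, ht⟩ := hclose δ hδ
      have key : ∀ k, k ≤ m → ∀ l, max t n0 ≤ l → signExp (r l) (k : Ordinal) =
          (if k < N then signAt x k else if k = N then some true else some false) := by
        intro k hk l hl
        rw [signExp_natCast]
        have h1 : x < r l := hn0 l (le_trans (le_max_right _ _) hl)
        have h2 : r l - x < δ :=
          lt_of_le_of_lt (le_abs_self _) (ht l (le_trans (le_max_left _ _) hl))
        exact (hP (r l) h1 h2).2 k (by omega)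
      have cond : ∀ m' ≤ (m : Ordinal), ∀ l, max t n0 ≤ l → ∀ l', max t n0 ≤ l' →
          signExp (r l) m' = signExp (r l') m' ∧ (signExp (r l) m').isSome := by
        intro m' hm' l hl l' hl'
        have hω : m' < Ordinal.omega0 := lt_of_le_of_lt hm' (Ordinal.nat_lt_omega0 m)
        obtain ⟨k, rfl⟩ := Ordinal.lt_omega0.mp hω
        have hk : k ≤ m := by exact_mod_cast hm'
        rw [key k hk l hl, key k hk l' hl']
        refine ⟨rfl, ?_⟩
        split_ifs with h1 h2
        · exact signAt_isSome (hmin k h1)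
        · rfl
        · rfl
      rw [slim_eq_some (fun n => signExp (r n)) _ (max t n0) cond]
      show signExp (r (max t n0)) (m : Ordinal) = _
      rw [key m le_rfl (max t n0) le_rfl]
      simp only [strAppend]
      rw [hlen, if_neg (not_lt.mpr (Nat.cast_le.mpr hm)), ← Ordinal.natCast_sub]
      rcases eq_or_lt_of_le hm with rfl | hm'
      · rw [if_neg (lt_irrefl N), if_pos rfl]
        simp [oneOverOmega]
      · rw [if_neg (by omega), if_neg (by omega)]
        have h0 : ((m - N : ℕ) : Ordinal) ≠ 0 := by
          rw [Ne, Nat.cast_eq_zero]; omega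
        simp only [oneOverOmega]
        rw [if_neg h0, if_pos (Ordinal.nat_lt_omega0 _)]
  · rw [slim_none_omega r γ hγ]
    obtain ⟨hng, hsg⟩ := omega_tail (N := N) hγ
    simp only [strAppend]
    rw [hlen, if_neg hng, oneOverOmega_omega0_le hsg]

private lemma case_dn (r : ℕ → ℝ) (x : ℝ)
    (hclose : ∀ δ : ℝ, 0 < δ → ∃ n0 : ℕ, ∀ n, n0 ≤ n → |r n - x| < δ)
    (N : ℕ) (hmin : ∀ k, k < N → cand (signState x k) ≠ x)
    (hN : cand (signState x N) = x)
    (hdn : ∃ n0 : ℕ, ∀ n, n0 ≤ n → r n < x) :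
    slim (fun n => signExp (r n)) = strAppend (signExp x) negOneOverOmega := by
  have hlen : strLength (signExp x) = (N : Ordinal) := strLength_signExp x N hmin hN
  funext γ
  rcases lt_or_ge γ Ordinal.omega0 with hγ | hγ
  · obtain ⟨m, rfl⟩ := Ordinal.lt_omega0.mp hγ
    rcases lt_or_ge m N with hm | hm
    · rw [slim_pre r x hclose m (fun k hk => hmin k (by omega))]
      simp only [strAppend]
      rw [hlen, if_pos (Nat.cast_lt.mpr hm), signExp_natCast]
    · obtain ⟨n0, hn0⟩ := hdn
      obtain ⟨δ, hδ, st0, -, -, hP⟩ := lower_tail x N hmin hN (m - N)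
      obtain ⟨t, ht⟩ := hclose δ hδ
      have key : ∀ k, k ≤ m → ∀ l, max t n0 ≤ l → signExp (r l) (k : Ordinal) =
          (if k < N then signAt x k else if k = N then some false else some true) := by
        intro k hk l hl
        rw [signExp_natCast]
        have h1 : r l < x := hn0 l (le_trans (le_max_right _ _) hl)
        have h2 : x - r l < δ := by
          have h3 := ht l (le_trans (le_max_left _ _) hl)
          rw [abs_sub_comm] at h3
          exact lt_of_le_of_lt (le_abs_self _) h3
        exact (hP (r l) h1 h2).2 k (by omega)
      have cond : ∀ m' ≤ (m : Ordinal), ∀ l, max t n0 ≤ l → ∀ l', max t n0 ≤ l' →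
          signExp (r l) m' = signExp (r l') m' ∧ (signExp (r l) m').isSome := by
        intro m' hm' l hl l' hl'
        have hω : m' < Ordinal.omega0 := lt_of_le_of_lt hm' (Ordinal.nat_lt_omega0 m)
        obtain ⟨k, rfl⟩ := Ordinal.lt_omega0.mp hω
        have hk : k ≤ m := by exact_mod_cast hm'
        rw [key k hk l hl, key k hk l' hl']
        refine ⟨rfl, ?_⟩
        split_ifs with h1 h2
        · exact signAt_isSome (hmin k h1)
        · rfl
        · rfl
      rw [slim_eq_some (fun n => signExp (r n)) _ (max t n0) cond]
      show signExp (r (max t n0)) (m : Ordinal) = _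
      rw [key m le_rfl (max t n0) le_rfl]
      simp only [strAppend]
      rw [hlen, if_neg (not_lt.mpr (Nat.cast_le.mpr hm)), ← Ordinal.natCast_sub]
      rcases eq_or_lt_of_le hm with rfl | hm'
      · rw [if_neg (lt_irrefl N), if_pos rfl]
        simp [negOneOverOmega]
      · rw [if_neg (by omega), if_neg (by omega)]
        have h0 : ((m - N : ℕ) : Ordinal) ≠ 0 := by
          rw [Ne, Nat.cast_eq_zero]; omega
        simp only [negOneOverOmega]
        rw [if_neg h0, if_pos (Ordinal.nat_lt_omega0 _)]
  · rw [slim_none_omega r γ hγ]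
    obtain ⟨hng, hsg⟩ := omega_tail (N := N) hγ
    simp only [strAppend]
    rw [hlen, if_neg hng, negOneOverOmega_omega0_le hsg]

private lemma case_mixed (r : ℕ → ℝ) (x : ℝ)
    (hclose : ∀ δ : ℝ, 0 < δ → ∃ n0 : ℕ, ∀ n, n0 ≤ n → |r n - x| < δ)
    (N : ℕ) (hmin : ∀ k, k < N → cand (signState x k) ≠ x)
    (hN : cand (signState x N) = x)
    (hup : ∀ n0 : ℕ, ∃ n, n0 ≤ n ∧ r n ≤ x)
    (hdn : ∀ n0 : ℕ, ∃ n, n0 ≤ n ∧ x ≤ r n) :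
    slim (fun n => signExp (r n)) = signExp x := by
  funext γ
  rcases lt_or_ge γ Ordinal.omega0 with hγ | hγ
  · obtain ⟨m, rfl⟩ := Ordinal.lt_omega0.mp hγ
    rcases lt_or_ge m N with hm | hm
    · rw [slim_pre r x hclose m (fun k hk => hmin k (by omega)), signExp_natCast]
    · rw [signExp_natCast, signAt_stopped x N hN m hm]
      apply slim_eq_none
      intro l0
      obtain ⟨δ, hδ, hs⟩ := signState_stable x N hmin
      obtain ⟨t, ht⟩ := hclose δ hδ
      obtain ⟨n1, hn1, hr1⟩ := hup (max l0 t)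
      obtain ⟨n2, hn2, hr2⟩ := hdn (max l0 t)
      refine ⟨(N : Ordinal), Nat.cast_le.mpr hm, n1, n2,
        le_trans (le_max_left _ _) hn1, le_trans (le_max_left _ _) hn2, ?_⟩
      rintro ⟨heq, hsome⟩
      have e1 : signExp (r n1) (N : Ordinal) = signAt (r n1) N := signExp_natCast _ N
      have e2 : signExp (r n2) (N : Ordinal) = signAt (r n2) N := signExp_natCast _ N
      have hc1 : cand (signState (r n1) N) = x := by
        rw [(hs (r n1) (ht n1 (le_trans (le_max_right _ _) hn1))).1, hN]
      have hc2 : cand (signState (r n2) N) = x := by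
        rw [(hs (r n2) (ht n2 (le_trans (le_max_right _ _) hn2))).1, hN]
      rcases lt_or_eq_of_le hr1 with h1 | h1
      · have v1 : signAt (r n1) N = some false := by simp [signAt, hc1, h1, asymm h1]
        rcases lt_or_eq_of_le hr2 with h2 | h2
        · have v2 : signAt (r n2) N = some true := by simp [signAt, hc2, h2]
          rw [e1, v1, e2, v2] at heq
          exact absurd heq (by simp)
        · have v2 : signAt (r n2) N = none := signAt_eq_none (hc2.trans h2)
          rw [e1, v1, e2, v2] at heq
          exact absurd heq (by simp)
      · have v1 : signAt (r n1) N = none := signAt_eq_none (hc1.trans h1.symm)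
        rw [e1, v1] at hsome
        simp at hsome
  · rw [slim_none_omega r γ hγ, signExp_none x γ hγ]

private lemma case_noterm (r : ℕ → ℝ) (x : ℝ)
    (hclose : ∀ δ : ℝ, 0 < δ → ∃ n0 : ℕ, ∀ n, n0 ≤ n → |r n - x| < δ)
    (hterm : ∀ n, cand (signState x n) ≠ x) :
    slim (fun n => signExp (r n)) = signExp x := by
  funext γ
  rcases lt_or_ge γ Ordinal.omega0 with hγ | hγ
  · obtain ⟨m, rfl⟩ := Ordinal.lt_omega0.mp hγ
    rw [slim_pre r x hclose m (fun k _ => hterm k), signExp_natCast]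
  · rw [slim_none_omega r γ hγ, signExp_none x γ hγ]

open Filter Topology in
/-- If a sequence of reals converges classically to a real `x`, then the s-limit
of the sign expansions of the `r n` equals the sign expansion of `x + ε` for some
`ε ∈ {0, 1/ω, -1/ω}`; here the expansion of `x + 1/ω` (resp. `x - 1/ω`) is the expansion of
`x` followed by `+---⋯` (resp. `-+++⋯`). -/
theorem slim_signExp_of_tendsto (r : ℕ → ℝ) (x : ℝ)
    (hconv : Tendsto r atTop (𝓝 x)) :
    slim (fun n => signExp (r n)) = signExp x ∨
    slim (fun n => signExp (r n)) = strAppend (signExp x) oneOverOmega ∨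
    slim (fun n => signExp (r n)) = strAppend (signExp x) negOneOverOmega := by
  have hclose : ∀ δ : ℝ, 0 < δ → ∃ n0 : ℕ, ∀ n, n0 ≤ n → |r n - x| < δ := by
    intro δ hδ
    obtain ⟨n0, hn0⟩ := Metric.tendsto_atTop.mp hconv δ hδ
    exact ⟨n0, fun n hn => by simpa [Real.dist_eq] using hn0 n hn⟩
  by_cases hterm : ∃ n, cand (signState x n) = x
  · have hN : cand (signState x (Nat.find hterm)) = x := Nat.find_spec hterm
    have hmin : ∀ k, k < Nat.find hterm → cand (signState x k) ≠ x :=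
      fun k hk => Nat.find_min hterm hk
    by_cases hup : ∃ n0 : ℕ, ∀ n, n0 ≤ n → x < r n
    · exact Or.inr (Or.inl (case_up r x hclose _ hmin hN hup))
    · by_cases hdn : ∃ n0 : ℕ, ∀ n, n0 ≤ n → r n < x
      · exact Or.inr (Or.inr (case_dn r x hclose _ hmin hN hdn))
      · push_neg at hup hdn
        refine Or.inl (case_mixed r x hclose _ hmin hN ?_ ?_)
        · intro n0
          obtain ⟨n, hn, hx⟩ := hup n0
          exact ⟨n, hn, hx⟩
        · intro n0
          obtain ⟨n, hn, hx⟩ := hdn n0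
          exact ⟨n, hn, hx⟩
  · push_neg at hterm
    exact Or.inl (case_noterm r x hclose hterm)
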